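/- Let A be a local ring, P an fs monoid with a map P → A, P → Q an injective Kummer-type homomorphism of fs monoids with Q torsion-free. Let I ⊂ A be the ideal generated by the image of P \ {1}, and let I' ⊂ A' := A ⊗_{Z[P]} Z[Q] be the ideal generated by the image of Q \ {1}. Then the natural map A/I → A'/I' is an isomorphism. -/

import Mathlib

open TensorProduct

/-- `ι : P →* G` realizes `G` as the group hull (Grothendieck group) `P^gp` of `P`. -/
def IsGp {P G : Type} [CommMonoid P] [CommGroup G] (ι : P →* G) : Prop :=
  (∀ x : G, ∃ a b : P, x = ι a * (ι b)⁻¹) ∧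
    (∀ a b : P, ι a = ι b ↔ ∃ c : P, a * c = b * c)

/-- `P` is saturated via `ι : P → P^gp`. -/
def IsSaturatedVia {P G : Type} [CommMonoid P] [CommGroup G] (ι : P →* G) : Prop :=
  Function.Injective ι ∧
    ∀ x : G, (∃ n : ℕ, 1 ≤ n ∧ x ^ n ∈ Set.range ι) → x ∈ Set.range ι

/-- `P` is fs: finitely generated and saturated. -/
def IsFsVia {P G : Type} [CommMonoid P] [CommGroup G] (ι : P →* G) : Prop :=
  Monoid.FG P ∧ IsSaturatedVia ι

/-- `h : P → Q` is of Kummer type. -/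
def IsKummer {P Q : Type} [CommMonoid P] [CommMonoid Q] (h : P →* Q) : Prop :=
  Function.Injective h ∧ ∀ a : Q, ∃ n : ℕ, 1 ≤ n ∧ a ^ n ∈ Set.range h

set_option maxHeartbeats 1000000 in
set_option synthInstance.maxHeartbeats 400000 in
/-- Let `A` be a local ring, `P` an fs monoid with `P → (A, ·)`, `P → Q` an injective
Kummer-type homomorphism of fs monoids with `Q` torsion free (its group hull `Q^gp` is torsion
free).  Let `I ⊆ A` be the ideal generated by the image of `P \ {1}` and
`I' ⊆ A' = A ⊗_{Z[P]} Z[Q]` the ideal generated by the image of `Q \ {1}`.  Then the natural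
map `A/I → A'/I'` is an isomorphism; equivalently, the composite `A → A' → A'/I'` is
surjective with kernel exactly `I`. -/
theorem stmt_12 (P Q G G' : Type) [CommMonoid P] [CommMonoid Q] [CommGroup G] [CommGroup G']
    (ιP : P →* G) (ιQ : Q →* G') (hgpP : IsGp ιP) (hgpQ : IsGp ιQ)
    (hP : IsFsVia ιP) (hQ : IsFsVia ιQ)
    (h : P →* Q) (hK : IsKummer h)
    (hQtf : ∀ x : G', ∀ n : ℕ, 1 ≤ n → x ^ n = 1 → x = 1)
    (A : Type) [CommRing A] [IsLocalRing A] (φ : P →* A)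
    [Algebra (MonoidAlgebra ℤ P) A]
    (hA : ∀ p : P, algebraMap (MonoidAlgebra ℤ P) A (MonoidAlgebra.single p 1) = φ p)
    [Algebra (MonoidAlgebra ℤ P) (MonoidAlgebra ℤ Q)]
    (hPQ : ∀ p : P, algebraMap (MonoidAlgebra ℤ P) (MonoidAlgebra ℤ Q)
      (MonoidAlgebra.single p 1) = MonoidAlgebra.single (h p) 1) :
    ∀ (I : Ideal A) (I' : Ideal (A ⊗[MonoidAlgebra ℤ P] MonoidAlgebra ℤ Q)),
      I = Ideal.span (φ '' {p : P | p ≠ 1}) →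
      I' = Ideal.span ((fun q : Q =>
        ((1 : A) ⊗ₜ MonoidAlgebra.single q (1 : ℤ) :
          A ⊗[MonoidAlgebra ℤ P] MonoidAlgebra ℤ Q)) '' {q : Q | q ≠ 1}) →
      Function.Surjective
        ((Ideal.Quotient.mk I').comp
          (Algebra.TensorProduct.includeLeftRingHom :
            A →+* A ⊗[MonoidAlgebra ℤ P] MonoidAlgebra ℤ Q)) ∧
      RingHom.ker
        ((Ideal.Quotient.mk I').comp
          (Algebra.TensorProduct.includeLeftRingHom :
            A →+* A ⊗[MonoidAlgebra ℤ P] MonoidAlgebra ℤ Q)) = I := by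
  intro I I' hI hI'
  classical
  -- injectivity of h at 1
  have hinj : Function.Injective h := hK.1
  have hne1 : ∀ p : P, p ≠ 1 → h p ≠ 1 := by
    intro p hp hc
    exact hp (hinj (by simpa using hc))
  -- key identity
  have key : ∀ p : P, (φ p ⊗ₜ (1 : MonoidAlgebra ℤ Q) :
      A ⊗[MonoidAlgebra ℤ P] MonoidAlgebra ℤ Q) =
      (1 : A) ⊗ₜ MonoidAlgebra.single (h p) (1 : ℤ) := by
    intro p
    rw [← hA p, ← hPQ p, Algebra.algebraMap_eq_smul_one, TensorProduct.smul_tmul,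
      Algebra.algebraMap_eq_smul_one]
  -- generators of I go to I'
  have hgen' : ∀ q : Q, q ≠ 1 →
      ((1 : A) ⊗ₜ MonoidAlgebra.single q (1 : ℤ) :
        A ⊗[MonoidAlgebra ℤ P] MonoidAlgebra ℤ Q) ∈ I' := by
    intro q hq
    rw [hI']
    exact Ideal.subset_span ⟨q, hq, rfl⟩
  have hIsub : ∀ a ∈ I,
      (a ⊗ₜ (1 : MonoidAlgebra ℤ Q) : A ⊗[MonoidAlgebra ℤ P] MonoidAlgebra ℤ Q) ∈ I' := by
    intro a ha
    have : I ≤ Ideal.comap (Algebra.TensorProduct.includeLeftRingHom :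
        A →+* A ⊗[MonoidAlgebra ℤ P] MonoidAlgebra ℤ Q) I' := by
      rw [hI]
      apply Ideal.span_le.2
      rintro _ ⟨p, hp, rfl⟩
      show (φ p ⊗ₜ (1 : MonoidAlgebra ℤ Q) : _) ∈ I'
      rw [key p]
      exact hgen' _ (hne1 p hp)
    exact this ha
  -- surjectivity
  have hsurj : Function.Surjective
      ((Ideal.Quotient.mk I').comp
        (Algebra.TensorProduct.includeLeftRingHom :
          A →+* A ⊗[MonoidAlgebra ℤ P] MonoidAlgebra ℤ Q)) := by
    intro z
    obtain ⟨t, rfl⟩ := Ideal.Quotient.mk_surjective z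
    suffices hsuff : ∃ a : A, Ideal.Quotient.mk I'
        ((a ⊗ₜ (1 : MonoidAlgebra ℤ Q) : A ⊗[MonoidAlgebra ℤ P] MonoidAlgebra ℤ Q))
        = Ideal.Quotient.mk I' t by
      obtain ⟨a, ha⟩ := hsuff
      exact ⟨a, ha⟩
    induction t using TensorProduct.induction_on with
    | zero => exact ⟨0, by simp⟩
    | add x y hx hy =>
      obtain ⟨a, ha⟩ := hx
      obtain ⟨b, hb⟩ := hy
      refine ⟨a + b, ?_⟩
      rw [TensorProduct.add_tmul, map_add, map_add, ha, hb]
    | tmul x y =>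
      induction y using MonoidAlgebra.induction_linear with
      | zero => exact ⟨0, by simp⟩
      | add f g hf hg =>
        obtain ⟨a, ha⟩ := hf
        obtain ⟨b, hb⟩ := hg
        refine ⟨a + b, ?_⟩
        rw [TensorProduct.tmul_add, map_add, TensorProduct.add_tmul, map_add, ha, hb]
      | single q n =>
        by_cases hq : q = 1
        · refine ⟨n • x, ?_⟩
          subst hq
          congr 1
          rw [TensorProduct.smul_tmul, MonoidAlgebra.one_def, MonoidAlgebra.smul_single,
            smul_eq_mul, mul_one]
        · refine ⟨0, ?_⟩
          rw [TensorProduct.zero_tmul, map_zero]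
          symm
          rw [Ideal.Quotient.eq_zero_iff_mem]
          have hx : (x ⊗ₜ MonoidAlgebra.single q n :
              A ⊗[MonoidAlgebra ℤ P] MonoidAlgebra ℤ Q)
              = ((n • x) ⊗ₜ (1 : MonoidAlgebra ℤ Q)) *
                ((1 : A) ⊗ₜ MonoidAlgebra.single q (1 : ℤ)) := by
            rw [Algebra.TensorProduct.tmul_mul_tmul, mul_one, one_mul,
              TensorProduct.smul_tmul, MonoidAlgebra.smul_single, smul_eq_mul, mul_one]
          rw [hx]
          exact Ideal.mul_mem_left _ _ (hgen' q hq)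
  refine ⟨hsurj, ?_⟩
  -- kernel
  apply le_antisymm
  · -- ker ≤ I
    by_cases h1 : (1 : A) ∈ I
    · intro a _
      simpa using I.mul_mem_left a h1
    · -- Q has no nontrivial "units"
      have hq1 : ∀ q q' : Q, q * q' = 1 → q = 1 := by
        intro q q' hqq
        obtain ⟨n, hn, p, hp⟩ := hK.2 q
        obtain ⟨m, hm, p', hp'⟩ := hK.2 q'
        have hone : h (p ^ m * p' ^ n) = 1 := by
          rw [map_mul, map_pow, map_pow, hp, hp', ← pow_mul, ← pow_mul, mul_comm m n,
            ← mul_pow, hqq, one_pow]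
        have hpp : p ^ m * p' ^ n = 1 := hinj (by simpa using hone)
        have hp1 : p = 1 := by
          by_contra hpne
          apply h1
          have hmem : φ p ∈ I := by
            rw [hI]; exact Ideal.subset_span ⟨p, hpne, rfl⟩
          have : φ p * (φ p ^ (m - 1) * φ p' ^ n) = 1 := by
            have := congrArg φ hpp
            rw [map_mul, map_pow, map_pow, map_one] at this
            calc φ p * (φ p ^ (m - 1) * φ p' ^ n)
                = φ p ^ (1 + (m - 1)) * φ p' ^ n := by
                  rw [pow_add, pow_one, mul_assoc]
              _ = 1 := by rw [Nat.add_sub_cancel' hm]; exact this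
          rw [← this]
          exact I.mul_mem_right _ hmem
        subst hp1
        have : ιQ q ^ n = 1 := by
          rw [← map_pow, ← hp, map_one, map_one]
        have : ιQ q = 1 := hQtf _ n hn this
        exact hQ.2.1 (by simpa using this)
      -- the monoid hom e : Q →* A/I
      have hq_mul : ∀ q q' : Q, q ≠ 1 → q * q' ≠ 1 := by
        intro q q' hq hc
        exact hq (hq1 q q' hc)
      let e : Q →* (A ⧸ I) :=
        { toFun := fun q => if q = 1 then 1 else 0
          map_one' := if_pos rfl
          map_mul' := by
            intro q q'
            by_cases hq : q = 1
            · subst hq; simp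
            · by_cases hq' : q' = 1
              · subst hq'; simp
              · simp only [if_neg hq, if_neg hq', if_neg (hq_mul q q' hq), mul_zero] }
      let g0 : MonoidAlgebra ℤ Q →ₐ[ℤ] (A ⧸ I) := MonoidAlgebra.lift ℤ (A ⧸ I) Q e
      have hφI : ∀ p : P, Ideal.Quotient.mk I (φ p) = e (h p) := by
        intro p
        by_cases hp : p = 1
        · subst hp; simp [e]
        · rw [Ideal.Quotient.eq_zero_iff_mem.2
            (by rw [hI]; exact Ideal.subset_span ⟨p, hp, rfl⟩)]
          simp [e, hne1 p hp]
      have hcomm : ∀ r : MonoidAlgebra ℤ P,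
          g0 (algebraMap (MonoidAlgebra ℤ P) (MonoidAlgebra ℤ Q) r)
            = algebraMap (MonoidAlgebra ℤ P) (A ⧸ I) r := by
        have : (g0.toRingHom.comp (algebraMap (MonoidAlgebra ℤ P) (MonoidAlgebra ℤ Q)))
            = algebraMap (MonoidAlgebra ℤ P) (A ⧸ I) := by
          apply MonoidAlgebra.ringHom_ext
          · intro b
            rw [show (MonoidAlgebra.single (1 : P) b : MonoidAlgebra ℤ P)
                = ((b : ℤ) : MonoidAlgebra ℤ P) from (MonoidAlgebra.intCast_def b).symm]
            rw [map_intCast, map_intCast]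
          · intro p
            rw [RingHom.comp_apply, hPQ p]
            have h1' : g0.toRingHom (MonoidAlgebra.single (h p) (1 : ℤ)) = e (h p) := by
              show g0 (MonoidAlgebra.single (h p) (1 : ℤ)) = e (h p)
              rw [MonoidAlgebra.lift_single, one_smul]
            rw [h1', ← hφI p, ← hA p, Ideal.Quotient.mk_algebraMap]
        intro r
        exact congrArg (fun F => F r) this
      let g : MonoidAlgebra ℤ Q →ₐ[MonoidAlgebra ℤ P] (A ⧸ I) :=
        { toRingHom := g0.toRingHom, commutes' := hcomm }
      let f : A →ₐ[MonoidAlgebra ℤ P] (A ⧸ I) := Ideal.Quotient.mkₐ (MonoidAlgebra ℤ P) I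
      let ψ := Algebra.TensorProduct.productMap f g
      have hψgen : ∀ q : Q, q ≠ 1 →
          ψ ((1 : A) ⊗ₜ MonoidAlgebra.single q (1 : ℤ)) = 0 := by
        intro q hq
        rw [Algebra.TensorProduct.productMap_apply_tmul, map_one, one_mul]
        show g0 (MonoidAlgebra.single q (1 : ℤ)) = 0
        rw [MonoidAlgebra.lift_single, one_smul]
        simp [e, hq]
      have hI'ker : I' ≤ RingHom.ker ψ.toRingHom := by
        rw [hI']
        apply Ideal.span_le.2
        rintro _ ⟨q, hq, rfl⟩
        exact hψgen q hq
      intro a ha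
      rw [RingHom.mem_ker, RingHom.comp_apply] at ha
      have hmem : (a ⊗ₜ (1 : MonoidAlgebra ℤ Q) :
          A ⊗[MonoidAlgebra ℤ P] MonoidAlgebra ℤ Q) ∈ I' := by
        rwa [← Ideal.Quotient.eq_zero_iff_mem]
      have : ψ (a ⊗ₜ (1 : MonoidAlgebra ℤ Q)) = 0 := hI'ker hmem
      rw [Algebra.TensorProduct.productMap_apply_tmul, map_one, mul_one] at this
      have : Ideal.Quotient.mk I a = 0 := this
      exact Ideal.Quotient.eq_zero_iff_mem.1 this
  · -- I ≤ ker
    intro a ha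
    rw [RingHom.mem_ker, RingHom.comp_apply]
    exact Ideal.Quotient.eq_zero_iff_mem.2 (hIsub a ha)
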